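/- arXiv:math/0105159 — 3 statements merged into one kernel-verified Lean document; each statement's English description precedes it below -/
import Mathlib

section
/- For every real ξ ≥ 1, the tail Fresnel integral satisfies the asymptotic bound: |∫_ξ^∞ e^{2πi y²} dy - e^{2πi ξ²} · c₁/ξ| ≤ C/ξ² for some absolute constants c₁ ∈ ℂ and C > 0. -/
open MeasureTheory Complex Filter


noncomputable def fg (y : ℝ) : ℂ := Complex.exp (2*Real.pi*Complex.I*(y:ℂ)^2)

noncomputable def cc : ℂ := 4*Real.pi*Complex.I

lemma cc_ne : cc ≠ 0 := by
  simp [cc, Complex.ext_iff, Real.pi_ne_zero]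

lemma cc_norm : ‖cc‖ = 4*Real.pi := by
  unfold cc
  rw [show ((4:ℂ)*Real.pi*Complex.I) = (((4*Real.pi:ℝ)):ℂ)*Complex.I by push_cast; ring]
  rw [norm_mul, Complex.norm_real, Complex.norm_I, mul_one, Real.norm_eq_abs,
    abs_of_pos (by positivity)]

lemma fg_cont : Continuous fg := by
  unfold fg; fun_prop

lemma fg_norm (y : ℝ) : ‖fg y‖ = 1 := by
  rw [fg, Complex.norm_exp]
  have : (2*(Real.pi:ℂ)*Complex.I*(y:ℂ)^2).re = 0 := by
    simp [Complex.mul_re, Complex.mul_im, ← Complex.ofReal_pow]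
  rw [this, Real.exp_zero]

lemma fg_deriv (y : ℝ) : HasDerivAt fg (cc*y * fg y) y := by
  have h := (((hasDerivAt_pow 2 ((y:ℂ))).const_mul (2*(Real.pi:ℂ)*Complex.I))).cexp
  have h2 := h.comp_ofReal
  convert h2 using 1
  · rfl
  rw [fg, cc]; push_cast; ring

lemma u_deriv1 {y : ℝ} (hy : y ≠ 0) :
    HasDerivAt (fun t:ℝ => ((t:ℂ))⁻¹) (-(1:ℂ)/(y:ℂ)^2) y := by
  have h := (hasDerivAt_inv (x := (y:ℂ)) (by exact_mod_cast hy)).comp_ofReal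
  convert h using 1
  rw [neg_div, one_div]

lemma u_deriv3 {y : ℝ} (hy : y ≠ 0) :
    HasDerivAt (fun t:ℝ => ((t:ℂ)^3)⁻¹) (-(3*(y:ℂ)^2)/((y:ℂ)^3)^2) y := by
  have hy' : ((y:ℂ)) ≠ 0 := by exact_mod_cast hy
  have h := ((hasDerivAt_pow 3 ((y:ℂ))).inv (pow_ne_zero 3 hy')).comp_ofReal
  convert h using 2
  · rfl
  · norm_num

lemma ibp1 {ξ R : ℝ} (hξ : 1 ≤ ξ) (hR : ξ ≤ R) :
    ∫ y in ξ..R, fg y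
      = cc⁻¹ * ((R:ℂ))⁻¹ * fg R - cc⁻¹ * ((ξ:ℂ))⁻¹ * fg ξ
        + ∫ y in ξ..R, cc⁻¹ * ((y:ℂ)^2)⁻¹ * fg y := by
  have hpos : ∀ x ∈ Set.uIcc ξ R, (0:ℝ) < x := by
    rw [Set.uIcc_of_le hR]
    intro x hx; linarith [hx.1]
  have hu : ∀ x ∈ Set.uIcc ξ R,
      HasDerivAt (fun t:ℝ => cc⁻¹ * ((t:ℂ))⁻¹) (cc⁻¹ * (-(1:ℂ)/(x:ℂ)^2)) x :=
    fun x hx => (u_deriv1 (hpos x hx).ne').const_mul cc⁻¹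
  have hv : ∀ x ∈ Set.uIcc ξ R, HasDerivAt fg (cc*x * fg x) x := fun x _ => fg_deriv x
  have hu' : IntervalIntegrable (fun x:ℝ => cc⁻¹ * (-(1:ℂ)/(x:ℂ)^2)) volume ξ R := by
    apply ContinuousOn.intervalIntegrable
    apply ContinuousOn.mul continuousOn_const
    apply ContinuousOn.div continuousOn_const (by fun_prop)
    intro x hx
    exact pow_ne_zero 2 (by exact_mod_cast (hpos x hx).ne')
  have hv' : IntervalIntegrable (fun x:ℝ => cc*x * fg x) volume ξ R := by
    exact ((continuous_const.mul Complex.continuous_ofReal).mul fg_cont).intervalIntegrable _ _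
  have h := intervalIntegral.integral_mul_deriv_eq_deriv_mul hu hv hu' hv'
  have e1 : ∫ x in ξ..R, (cc⁻¹ * ((x:ℂ))⁻¹) * (cc*x * fg x) = ∫ y in ξ..R, fg y := by
    apply intervalIntegral.integral_congr
    intro x hx
    have hx0 : ((x:ℂ)) ≠ 0 := by exact_mod_cast (hpos x hx).ne'
    have hne : cc * (x:ℂ) ≠ 0 := mul_ne_zero cc_ne hx0
    field_simp
    exact mul_div_cancel_left₀ (fg x) cc_ne
  have e2 : ∫ x in ξ..R, (cc⁻¹ * (-(1:ℂ)/(x:ℂ)^2)) * fg x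
      = - ∫ y in ξ..R, cc⁻¹ * ((y:ℂ)^2)⁻¹ * fg y := by
    rw [← intervalIntegral.integral_neg]
    congr 1; funext x; ring
  rw [e1, e2] at h
  rw [h]; ring

lemma ibp2 {ξ R : ℝ} (hξ : 1 ≤ ξ) (hR : ξ ≤ R) :
    ∫ y in ξ..R, cc⁻¹ * ((y:ℂ)^2)⁻¹ * fg y
      = cc⁻¹^2 * ((R:ℂ)^3)⁻¹ * fg R - cc⁻¹^2 * ((ξ:ℂ)^3)⁻¹ * fg ξ
        + ∫ y in ξ..R, 3 * cc⁻¹^2 * ((y:ℂ)^4)⁻¹ * fg y := by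
  have hpos : ∀ x ∈ Set.uIcc ξ R, (0:ℝ) < x := by
    rw [Set.uIcc_of_le hR]
    intro x hx; linarith [hx.1]
  have hu : ∀ x ∈ Set.uIcc ξ R,
      HasDerivAt (fun t:ℝ => cc⁻¹^2 * ((t:ℂ)^3)⁻¹)
        (cc⁻¹^2 * (-(3*(x:ℂ)^2)/((x:ℂ)^3)^2)) x :=
    fun x hx => (u_deriv3 (hpos x hx).ne').const_mul _
  have hv : ∀ x ∈ Set.uIcc ξ R, HasDerivAt fg (cc*x * fg x) x := fun x _ => fg_deriv x
  have hu' : IntervalIntegrable (fun x:ℝ => cc⁻¹^2 * (-(3*(x:ℂ)^2)/((x:ℂ)^3)^2)) volume ξ R := by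
    apply ContinuousOn.intervalIntegrable
    apply ContinuousOn.mul continuousOn_const
    apply ContinuousOn.div (by fun_prop) (by fun_prop)
    intro x hx
    exact pow_ne_zero 2 (pow_ne_zero 3 (by exact_mod_cast (hpos x hx).ne'))
  have hv' : IntervalIntegrable (fun x:ℝ => cc*x * fg x) volume ξ R := by
    exact ((continuous_const.mul Complex.continuous_ofReal).mul fg_cont).intervalIntegrable _ _
  have h := intervalIntegral.integral_mul_deriv_eq_deriv_mul hu hv hu' hv'
  have e1 : ∫ x in ξ..R, (cc⁻¹^2 * ((x:ℂ)^3)⁻¹) * (cc*x * fg x)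
      = ∫ y in ξ..R, cc⁻¹ * ((y:ℂ)^2)⁻¹ * fg y := by
    apply intervalIntegral.integral_congr
    intro x hx
    have hx0 : ((x:ℂ)) ≠ 0 := by exact_mod_cast (hpos x hx).ne'
    field_simp [cc_ne]
  have e2 : ∫ x in ξ..R, (cc⁻¹^2 * (-(3*(x:ℂ)^2)/((x:ℂ)^3)^2)) * fg x
      = - ∫ y in ξ..R, 3 * cc⁻¹^2 * ((y:ℂ)^4)⁻¹ * fg y := by
    rw [← intervalIntegral.integral_neg]
    apply intervalIntegral.integral_congr
    intro x hx
    have hx0 : ((x:ℂ)) ≠ 0 := by exact_mod_cast (hpos x hx).ne'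
    beta_reduce
    rw [show ((x:ℂ)^3)^2 = (x:ℂ)^4 * (x:ℂ)^2 by ring,
      show -(3*(x:ℂ)^2) = (-3) * (x:ℂ)^2 by ring,
      mul_div_mul_right _ _ (pow_ne_zero 2 hx0), div_eq_mul_inv]
    ring
  rw [e1, e2] at h
  rw [h]; ring

lemma norm_aux (a : ℂ) (n : ℕ) {y : ℝ} (hy : 0 < y) :
    ‖a * ((y:ℂ)^n)⁻¹ * fg y‖ = ‖a‖ * ((y^n)⁻¹) := by
  rw [norm_mul, norm_mul, fg_norm, mul_one, norm_inv, norm_pow, Complex.norm_real,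
    Real.norm_eq_abs, abs_of_pos hy]

lemma rpow_neg_nat {y : ℝ} (hy : 0 < y) (n : ℕ) : y^(-(n:ℝ)) = (y^n)⁻¹ := by
  rw [Real.rpow_neg hy.le, Real.rpow_natCast]

lemma aux_integrable (a : ℂ) (n : ℕ) (hn : 2 ≤ n) {ξ : ℝ} (hξ : 0 < ξ) :
    IntegrableOn (fun y:ℝ => a * ((y:ℂ)^n)⁻¹ * fg y) (Set.Ioi ξ) := by
  have hlt : (-(n:ℝ)) < -1 := by
    have : (1:ℝ) < n := by exact_mod_cast lt_of_lt_of_le one_lt_two hn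
    linarith
  have hdom : IntegrableOn (fun y:ℝ => ‖a‖ * y^(-(n:ℝ))) (Set.Ioi ξ) :=
    (integrableOn_Ioi_rpow_of_lt hlt hξ).const_mul _
  apply Integrable.mono hdom
  · apply ContinuousOn.aestronglyMeasurable _ measurableSet_Ioi
    apply ContinuousOn.mul _ fg_cont.continuousOn
    apply ContinuousOn.mul continuousOn_const
    apply ContinuousOn.inv₀ (by fun_prop)
    intro x hx
    have : (0:ℝ) < x := lt_trans hξ hx
    exact pow_ne_zero n (by exact_mod_cast this.ne')
  · filter_upwards [ae_restrict_mem measurableSet_Ioi] with y hy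
    have hy0 : (0:ℝ) < y := lt_trans hξ hy
    rw [norm_aux a n hy0, Real.norm_eq_abs,
      _root_.abs_of_nonneg (mul_nonneg (norm_nonneg a) (Real.rpow_nonneg hy0.le _)),
      rpow_neg_nat hy0]

lemma norm_integral_s (a : ℂ) {ξ : ℝ} (hξ : 0 < ξ) :
    ‖∫ y in Set.Ioi ξ, a * ((y:ℂ)^4)⁻¹ * fg y‖ ≤ ‖a‖ * (ξ^3)⁻¹ / 3 := by
  have hdom : IntegrableOn (fun y:ℝ => ‖a‖ * y^(-(4:ℝ))) (Set.Ioi ξ) :=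
    (integrableOn_Ioi_rpow_of_lt (by norm_num) hξ).const_mul _
  have hbd : ∀ᵐ (y:ℝ) ∂(volume.restrict (Set.Ioi ξ)),
      ‖a * ((y:ℂ)^4)⁻¹ * fg y‖ ≤ ‖a‖ * y^(-(4:ℝ)) := by
    filter_upwards [ae_restrict_mem measurableSet_Ioi] with y hy
    have hy0 : (0:ℝ) < y := lt_trans hξ hy
    rw [norm_aux a 4 hy0, show (-(4:ℝ)) = -((4:ℕ):ℝ) by norm_num, rpow_neg_nat hy0]
  have h := MeasureTheory.norm_integral_le_of_norm_le hdom hbd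
  refine h.trans (le_of_eq ?_)
  rw [MeasureTheory.integral_const_mul, integral_Ioi_rpow_of_lt (by norm_num) hξ]
  rw [show ((-4:ℝ)+1) = -((3:ℕ):ℝ) by norm_num, rpow_neg_nat hξ]
  ring

lemma boundary_tendsto (a : ℂ) (n : ℕ) (hn : 1 ≤ n) :
    Tendsto (fun R:ℝ => a * ((R:ℂ)^n)⁻¹ * fg R) atTop (nhds 0) := by
  have hb : ∀ᶠ (R:ℝ) in atTop, ‖a * ((R:ℂ)^n)⁻¹ * fg R‖ ≤ ‖a‖ * ((R^n)⁻¹) := by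
    filter_upwards [eventually_gt_atTop 0] with R hR
    rw [norm_aux a n hR]
  have hg : Tendsto (fun R:ℝ => ‖a‖ * ((R^n)⁻¹)) atTop (nhds 0) := by
    have h1 : Tendsto (fun R:ℝ => (R^n)⁻¹) atTop (nhds 0) :=
      (tendsto_pow_atTop (by omega : n ≠ 0)).inv_tendsto_atTop
    simpa using h1.const_mul ‖a‖
  exact squeeze_zero_norm' hb hg

lemma fg_eq (y : ℝ) : Complex.exp (2 * Real.pi * Complex.I * ((y ^ 2 : ℝ) : ℂ)) = fg y := by
  rw [fg, Complex.ofReal_pow]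


/-- tail Fresnel integral asymptotics: there are absolute constants
`c₁ ∈ ℂ` and `C > 0` so that for every `ξ ≥ 1` the improper integral
`∫_ξ^∞ e^{2πi y²} dy` converges to some limit `L` and
`‖L - e^{2πi ξ²} · c₁ / ξ‖ ≤ C / ξ²`. -/
theorem tail_fresnel_asymptotic :
    ∃ (c₁ : ℂ) (C : ℝ), 0 < C ∧ ∀ ξ : ℝ, 1 ≤ ξ →
      ∃ L : ℂ,
        Tendsto (fun R : ℝ => ∫ y in ξ..R,
            Complex.exp (2 * Real.pi * Complex.I * ((y ^ 2 : ℝ) : ℂ))) atTop (nhds L) ∧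
        ‖L - Complex.exp (2 * Real.pi * Complex.I * ((ξ ^ 2 : ℝ) : ℂ)) * c₁ / (ξ : ℂ)‖
          ≤ C / ξ ^ 2 := by
  refine ⟨-cc⁻¹, 1, one_pos, fun ξ hξ => ?_⟩
  have hξ0 : (0:ℝ) < ξ := lt_of_lt_of_le one_pos hξ
  have hξc : ((ξ:ℂ)) ≠ 0 := by exact_mod_cast hξ0.ne'
  have hr_int := aux_integrable cc⁻¹ 2 le_rfl hξ0
  have hs_int := aux_integrable (3*cc⁻¹^2) 4 (by norm_num) hξ0
  have tr := MeasureTheory.intervalIntegral_tendsto_integral_Ioi ξ hr_int tendsto_id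
  have ts := MeasureTheory.intervalIntegral_tendsto_integral_Ioi ξ hs_int tendsto_id
  refine ⟨-(cc⁻¹ * ((ξ:ℂ))⁻¹ * fg ξ) + ∫ y in Set.Ioi ξ, cc⁻¹ * ((y:ℂ)^2)⁻¹ * fg y, ?_, ?_⟩
  · have h1 := (boundary_tendsto cc⁻¹ 1 le_rfl).sub
      (tendsto_const_nhds (x := cc⁻¹ * ((ξ:ℂ))⁻¹ * fg ξ) (f := atTop))
    have hmain := h1.add tr
    rw [zero_sub] at hmain
    apply hmain.congr'
    filter_upwards [eventually_ge_atTop ξ] with R hR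
    simp only [id_eq]
    rw [show (fun y:ℝ => Complex.exp (2 * Real.pi * Complex.I * ((y ^ 2 : ℝ) : ℂ))) = fg by
      funext y; exact fg_eq y]
    rw [ibp1 hξ hR, pow_one]
  · have hid : (∫ y in Set.Ioi ξ, cc⁻¹*((y:ℂ)^2)⁻¹*fg y)
        = -(cc⁻¹^2*((ξ:ℂ)^3)⁻¹*fg ξ) + ∫ y in Set.Ioi ξ, 3*cc⁻¹^2*((y:ℂ)^4)⁻¹*fg y := by
      have h3 := (boundary_tendsto (cc⁻¹^2) 3 (by norm_num)).sub
        (tendsto_const_nhds (x := cc⁻¹^2*((ξ:ℂ)^3)⁻¹*fg ξ) (f := atTop))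
      have hmain := h3.add ts
      rw [zero_sub] at hmain
      refine tendsto_nhds_unique (tr.congr' ?_) hmain
      filter_upwards [eventually_ge_atTop ξ] with R hR
      simp only [id_eq]
      exact ibp2 hξ hR
    have hL : (-(cc⁻¹ * ((ξ:ℂ))⁻¹ * fg ξ) + ∫ y in Set.Ioi ξ, cc⁻¹ * ((y:ℂ)^2)⁻¹ * fg y)
        - Complex.exp (2 * Real.pi * Complex.I * ((ξ ^ 2 : ℝ) : ℂ)) * -cc⁻¹ / ξ
        = ∫ y in Set.Ioi ξ, cc⁻¹ * ((y:ℂ)^2)⁻¹ * fg y := by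
      rw [fg_eq]; field_simp
      ring
    rw [hL, hid]
    refine (norm_add_le _ _).trans ?_
    rw [norm_neg, norm_aux (cc⁻¹^2) 3 hξ0]
    have h2 := norm_integral_s (3*cc⁻¹^2) hξ0
    have hnorm : ‖cc⁻¹‖ = (4*Real.pi)⁻¹ := by rw [norm_inv, cc_norm]
    have hn2 : ‖cc⁻¹^2‖ = ((4*Real.pi)⁻¹)^2 := by rw [norm_pow, hnorm]
    have hn3 : ‖3*cc⁻¹^2‖ = 3*((4*Real.pi)⁻¹)^2 := by
      rw [norm_mul, hn2]; norm_num
    rw [hn2]; rw [hn3] at h2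
    have hπ := Real.pi_gt_three
    have hA : ((4*Real.pi)⁻¹:ℝ) ≤ 12⁻¹ := by
      apply inv_anti₀ (by norm_num)
      linarith
    have hA0 : (0:ℝ) < (4*Real.pi)⁻¹ := by positivity
    have hξ3 : ((ξ^3)⁻¹:ℝ) ≤ (ξ^2)⁻¹ := by
      apply inv_anti₀ (by positivity)
      calc ξ^2 = ξ^2 * 1 := by ring
        _ ≤ ξ^2 * ξ := by nlinarith
        _ = ξ^3 := by ring
    have hξ2 : (0:ℝ) < (ξ^2)⁻¹ := by positivity
    have hξ3' : (0:ℝ) ≤ (ξ^3)⁻¹ := by positivity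
    calc ((4*Real.pi)⁻¹)^2 * (ξ^3)⁻¹ + ‖∫ y in Set.Ioi ξ, 3*cc⁻¹^2*((y:ℂ)^4)⁻¹*fg y‖
        ≤ ((4*Real.pi)⁻¹)^2 * (ξ^3)⁻¹ + 3*((4*Real.pi)⁻¹)^2 * (ξ^3)⁻¹ / 3 := by linarith
      _ ≤ 1 / ξ^2 := by
          have hA2 : ((4*Real.pi)⁻¹:ℝ)^2 ≤ 144⁻¹ := by nlinarith
          have key : ((4*Real.pi)⁻¹:ℝ)^2 * (ξ^3)⁻¹ ≤ 144⁻¹ * (ξ^2)⁻¹ :=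
            mul_le_mul hA2 hξ3 hξ3' (by norm_num)
          rw [one_div]
          linarith
end

section
/- Van der Corput second derivative test: if φ : ℝ → ℝ is twice continuously differentiable on [a,b] with φ''(y) ≥ λ > 0 for all y ∈ [a,b], then |∫_a^b e^{iφ(y)} dy| ≤ C λ^{-1/2} for an absolute constant C (independent of a, b, φ). -/
open MeasureTheory Complex Set intervalIntegral

/-- Van der Corput first-derivative-type estimate on an interval where the
phase derivative has a fixed sign, is bounded away from zero, and has
nonnegative derivative (monotone phase derivative). -/
lemma vdc_nonstationary (c d : ℝ) (hcd : c ≤ d) (φ ψ χ : ℝ → ℝ) (μ : ℝ) (hμ : 0 < μ)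
    (hφc : ContinuousOn φ (Icc c d))
    (hψc : ContinuousOn ψ (Icc c d))
    (hχc : ContinuousOn χ (Icc c d))
    (hφ' : ∀ y ∈ Ioo c d, HasDerivAt φ (ψ y) y)
    (hψ' : ∀ y ∈ Ioo c d, HasDerivAt ψ (χ y) y)
    (hχ0 : ∀ y ∈ Icc c d, 0 ≤ χ y)
    (hsign : (∀ y ∈ Icc c d, μ ≤ ψ y) ∨ (∀ y ∈ Icc c d, ψ y ≤ -μ)) :
    ‖∫ y in c..d, Complex.exp (Complex.I * ((φ y : ℝ) : ℂ))‖ ≤ 4 / μ := by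
  have habs : ∀ y ∈ Icc c d, μ ≤ |ψ y| := by
    intro y hy
    rcases hsign with h | h
    · exact le_trans (h y hy) (le_abs_self _)
    · exact le_trans (by linarith [h y hy]) (neg_le_abs _)
  have hψne : ∀ y ∈ Icc c d, ψ y ≠ 0 := by
    intro y hy h
    have := habs y hy
    rw [h, abs_zero] at this; linarith
  -- the antiderivative for integration by parts
  set g : ℝ → ℂ := fun y => Complex.exp (Complex.I * (φ y : ℂ)) / (Complex.I * (ψ y : ℂ)) with hg
  have hgc : ContinuousOn g (Icc c d) := by
    apply ContinuousOn.div
    · exact (Complex.continuous_exp.comp (continuous_const.mul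
        (Complex.continuous_ofReal))).comp_continuousOn hφc
    · exact continuousOn_const.mul (Complex.continuous_ofReal.comp_continuousOn hψc)
    · intro y hy
      exact mul_ne_zero Complex.I_ne_zero (Complex.ofReal_ne_zero.2 (hψne y hy))
  have hgd : ∀ y ∈ Ioo c d, HasDerivAt g
      (Complex.exp (Complex.I * (φ y : ℂ)) +
        Complex.I * (χ y : ℂ) * Complex.exp (Complex.I * (φ y : ℂ)) / ((ψ y : ℂ))^2) y := by
    intro y hy
    have hyc : y ∈ Icc c d := Ioo_subset_Icc_self hy
    have hN : HasDerivAt (fun y => Complex.exp (Complex.I * (φ y : ℂ)))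
        (Complex.I * (ψ y : ℂ) * Complex.exp (Complex.I * (φ y : ℂ))) y := by
      have h1 : HasDerivAt (fun y => Complex.I * (φ y : ℂ)) (Complex.I * (ψ y : ℂ)) y :=
        ((Complex.ofRealCLM.hasDerivAt.scomp y (hφ' y hy)).const_mul Complex.I).congr_deriv (by
          simp [mul_comm])
      simpa [mul_comm] using h1.cexp
    have hD : HasDerivAt (fun y => Complex.I * (ψ y : ℂ)) (Complex.I * (χ y : ℂ)) y := by
      have := (Complex.ofRealCLM.hasDerivAt.scomp y (hψ' y hy)).const_mul Complex.I
      simpa [mul_comm] using this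
    have hq := hN.div hD (mul_ne_zero Complex.I_ne_zero (Complex.ofReal_ne_zero.2 (hψne y hyc)))
    apply hq.congr_deriv
    have hψy : (ψ y : ℂ) ≠ 0 := Complex.ofReal_ne_zero.2 (hψne y hyc)
    have hI3 : (Complex.I)^3 = -Complex.I := by
      simp [pow_succ, Complex.I_sq]
    field_simp
    ring_nf
    rw [Complex.I_sq]
    ring
  set e : ℝ → ℂ := fun y => Complex.exp (Complex.I * (φ y : ℂ)) with he
  set r : ℝ → ℂ := fun y =>
    Complex.I * (χ y : ℂ) * Complex.exp (Complex.I * (φ y : ℂ)) / ((ψ y : ℂ))^2 with hr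
  have hIcc : uIcc c d = Icc c d := uIcc_of_le hcd
  have hecont : ContinuousOn e (Icc c d) :=
    (Complex.continuous_exp.comp (continuous_const.mul Complex.continuous_ofReal)).comp_continuousOn hφc
  have hrcont : ContinuousOn r (Icc c d) := by
    apply ContinuousOn.div
    · exact (continuousOn_const.mul (Complex.continuous_ofReal.comp_continuousOn hχc)).mul hecont
    · exact (Complex.continuous_ofReal.comp_continuousOn hψc).pow 2
    · intro y hy
      exact pow_ne_zero 2 (Complex.ofReal_ne_zero.2 (hψne y hy))
  have hint1 : IntervalIntegrable e volume c d := by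
    apply ContinuousOn.intervalIntegrable; rwa [hIcc]
  have hint2 : IntervalIntegrable r volume c d := by
    apply ContinuousOn.intervalIntegrable; rwa [hIcc]
  have hftc : ∫ y in c..d, (e y + r y) = g d - g c :=
    intervalIntegral.integral_eq_sub_of_hasDeriv_right_of_le hcd hgc
      (fun y hy => (hgd y hy).hasDerivWithinAt) (hint1.add hint2)
  rw [intervalIntegral.integral_add hint1 hint2] at hftc
  have hsplit : ∫ y in c..d, e y = g d - g c - ∫ y in c..d, r y := by
    rw [← hftc]; ring
  -- bound on the boundary terms
  have hgb : ∀ y ∈ Icc c d, ‖g y‖ ≤ 1 / μ := by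
    intro y hy
    have h1 : ‖Complex.exp (Complex.I * (φ y : ℂ))‖ = 1 := by
      rw [Complex.norm_exp]
      simp
    have h2 : ‖Complex.I * ((ψ y : ℝ) : ℂ)‖ = |ψ y| := by
      rw [norm_mul, Complex.norm_I, Complex.norm_real, Real.norm_eq_abs,
        one_mul]
    rw [hg]
    simp only [norm_div, h1, h2]
    rw [div_le_div_iff₀ (lt_of_lt_of_le hμ (habs y hy)) hμ, one_mul, one_mul]
    exact habs y hy
  -- bound on the remainder integral
  have hrnorm : ∀ y ∈ Icc c d, ‖r y‖ = χ y / (ψ y)^2 := by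
    intro y hy
    have h1 : ‖Complex.exp (Complex.I * (φ y : ℂ))‖ = 1 := by
      rw [Complex.norm_exp]; simp
    rw [hr]
    simp only [norm_div, norm_mul, h1, Complex.norm_I, Complex.norm_real, Real.norm_eq_abs,
      mul_one, one_mul]
    rw [← Complex.ofReal_pow, Complex.norm_real, Real.norm_eq_abs, _root_.abs_of_nonneg (hχ0 y hy),
      _root_.abs_of_nonneg (sq_nonneg _)]
  have hrealint : ∫ y in c..d, χ y / (ψ y)^2 = (-(ψ d)⁻¹) - (-(ψ c)⁻¹) := by
    apply intervalIntegral.integral_eq_sub_of_hasDeriv_right_of_le hcd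
    · exact (hψc.inv₀ hψne).neg
    · intro y hy
      have hyc : y ∈ Icc c d := Ioo_subset_Icc_self hy
      have := ((hψ' y hy).inv (hψne y hyc)).neg
      apply HasDerivAt.hasDerivWithinAt
      apply this.congr_deriv
      field_simp
    · apply ContinuousOn.intervalIntegrable
      rw [hIcc]
      exact (hχc.div ((hψc.pow 2)) (fun y hy => pow_ne_zero 2 (hψne y hy)))
  have hrint_bound : ‖∫ y in c..d, r y‖ ≤ 2 / μ := by
    have h1 : ‖∫ y in c..d, r y‖ ≤ |∫ y in c..d, χ y / (ψ y)^2| := by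
      apply intervalIntegral.norm_integral_le_abs_of_norm_le
      · apply (ae_restrict_iff' measurableSet_uIoc).2
        apply Filter.Eventually.of_forall
        intro y hy
        rw [uIoc_of_le hcd] at hy
        exact le_of_eq (hrnorm y (Ioc_subset_Icc_self hy))
      · apply ContinuousOn.intervalIntegrable
        rw [hIcc]
        exact (hχc.div ((hψc.pow 2)) (fun y hy => pow_ne_zero 2 (hψne y hy)))
    have hinvb : ∀ y ∈ Icc c d, |(ψ y)⁻¹| ≤ 1/μ := by
      intro y hy
      rw [abs_inv, one_div]
      exact inv_anti₀ hμ (habs y hy)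
    calc ‖∫ y in c..d, r y‖ ≤ |∫ y in c..d, χ y / (ψ y)^2| := h1
      _ = |(-(ψ d)⁻¹) - (-(ψ c)⁻¹)| := by rw [hrealint]
      _ ≤ |(ψ d)⁻¹| + |(ψ c)⁻¹| := by
          calc |(-(ψ d)⁻¹) - (-(ψ c)⁻¹)| ≤ |(-(ψ d)⁻¹)| + |(-(ψ c)⁻¹)| := abs_sub _ _
            _ = |(ψ d)⁻¹| + |(ψ c)⁻¹| := by rw [abs_neg, abs_neg]
      _ ≤ 1/μ + 1/μ := add_le_add (hinvb d (right_mem_Icc.2 hcd)) (hinvb c (left_mem_Icc.2 hcd))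
      _ = 2/μ := by ring
  calc ‖∫ y in c..d, e y‖ = ‖g d - g c - ∫ y in c..d, r y‖ := by rw [hsplit]
    _ ≤ ‖g d - g c‖ + ‖∫ y in c..d, r y‖ := norm_sub_le _ _
    _ ≤ (‖g d‖ + ‖g c‖) + ‖∫ y in c..d, r y‖ := by
        exact add_le_add (norm_sub_le _ _) le_rfl
    _ ≤ (1/μ + 1/μ) + 2/μ := by
        refine add_le_add (add_le_add (hgb d (right_mem_Icc.2 hcd)) (hgb c (left_mem_Icc.2 hcd)))
          hrint_bound
    _ = 4/μ := by ring

/-- van der Corput second derivative test.  There is an absolute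
constant `C` such that for every `a ≤ b`, every `φ : ℝ → ℝ` that is twice
continuously differentiable on `[a,b]` with second derivative bounded below by
`λ > 0` on `[a,b]`, one has `|∫_a^b e^{iφ(y)} dy| ≤ C λ^{-1/2}`. -/
theorem van_der_corput_second_derivative :
    ∃ C : ℝ, 0 < C ∧ ∀ (a b : ℝ) (φ : ℝ → ℝ) (lam : ℝ), 0 < lam → a ≤ b →
      ContDiffOn ℝ 2 φ (Set.Icc a b) →
      (∀ y ∈ Set.Icc a b, lam ≤ iteratedDerivWithin 2 φ (Set.Icc a b) y) →
      ‖∫ y in a..b, Complex.exp (Complex.I * ((φ y : ℝ) : ℂ))‖ ≤ C / Real.sqrt lam := by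
  refine ⟨10, by norm_num, fun a b φ lam hlam hab hφ hχ => ?_⟩
  have hsq : 0 < Real.sqrt lam := Real.sqrt_pos.2 hlam
  rcases eq_or_lt_of_le hab with rfl | hab'
  · rw [intervalIntegral.integral_same, norm_zero]
    positivity
  -- setup
  set s : Set ℝ := Icc a b with hs
  have hus : UniqueDiffOn ℝ s := uniqueDiffOn_Icc hab'
  set ψ : ℝ → ℝ := derivWithin φ s with hψdef
  set χ : ℝ → ℝ := iteratedDerivWithin 2 φ s with hχdef
  have hψ1 : ContDiffOn ℝ 1 ψ s := hφ.derivWithin hus (by norm_num)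
  have hψc : ContinuousOn ψ s := hψ1.continuousOn
  have hχeq : ∀ y ∈ s, χ y = derivWithin ψ s y := by
    intro y hy
    rw [hχdef, show (2 : ℕ) = 1 + 1 from rfl, iteratedDerivWithin_succ',
      iteratedDerivWithin_one]
  have hχc : ContinuousOn χ s :=
    hφ.continuousOn_iteratedDerivWithin (by norm_num) hus
  have hφc : ContinuousOn φ s := hφ.continuousOn
  -- derivatives as genuine derivatives in the interior
  have hφ' : ∀ y ∈ Ioo a b, HasDerivAt φ (ψ y) y := by
    intro y hy
    have hmem : s ∈ nhds y := Icc_mem_nhds hy.1 hy.2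
    have hdw : DifferentiableWithinAt ℝ φ s y :=
      (hφ.differentiableOn (by norm_num)) y (Ioo_subset_Icc_self hy)
    exact (hdw.hasDerivWithinAt.hasDerivAt hmem)
  have hψ' : ∀ y ∈ Ioo a b, HasDerivAt ψ (χ y) y := by
    intro y hy
    have hmem : s ∈ nhds y := Icc_mem_nhds hy.1 hy.2
    have hdw : DifferentiableWithinAt ℝ ψ s y :=
      (hψ1.differentiableOn (by norm_num)) y (Ioo_subset_Icc_self hy)
    rw [hχeq y (Ioo_subset_Icc_self hy)]
    exact (hdw.hasDerivWithinAt.hasDerivAt hmem)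
  have hχ0 : ∀ y ∈ s, 0 ≤ χ y := fun y hy => le_of_lt (lt_of_lt_of_le hlam (hχ y hy))
  have hχlam : ∀ y ∈ s, lam ≤ χ y := hχ
  -- ψ is monotone with MVT-type lower bound
  have hmvt : ∀ x ∈ s, ∀ y ∈ s, x ≤ y → lam * (y - x) ≤ ψ y - ψ x := by
    have hint : interior s = Ioo a b := interior_Icc
    apply Convex.mul_sub_le_image_sub_of_le_deriv (convex_Icc a b) hψc
    · rw [hint]
      intro y hy
      exact (hψ' y hy).differentiableAt.differentiableWithinAt
    · rw [hint]
      intro y hy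
      rw [(hψ' y hy).deriv]
      exact hχlam y (Ioo_subset_Icc_self hy)
  have hmono : ∀ x ∈ s, ∀ y ∈ s, x ≤ y → ψ x ≤ ψ y := by
    intro x hx y hy hxy
    nlinarith [hmvt x hx y hy hxy]
  set μ := Real.sqrt lam with hμdef
  have hμlam : μ * μ = lam := Real.mul_self_sqrt hlam.le
  have hμdiv : μ / lam = 1 / μ := by
    rw [eq_div_iff (ne_of_gt hsq), div_mul_eq_mul_div, mul_comm, ← hμlam]
    field_simp
  have hmema : a ∈ s := left_mem_Icc.2 hab
  have hmemb : b ∈ s := right_mem_Icc.2 hab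
  -- key sub-estimate: on any subinterval where ψ has a sign we get 4/μ
  have key : ∀ c d : ℝ, c ∈ s → d ∈ s → c ≤ d →
      ((∀ y ∈ Icc c d, μ ≤ ψ y) ∨ (∀ y ∈ Icc c d, ψ y ≤ -μ)) →
      ‖∫ y in c..d, Complex.exp (Complex.I * ((φ y : ℝ) : ℂ))‖ ≤ 4 / μ := by
    intro c d hc hd hcd hsgn
    have hsub : Icc c d ⊆ s := Icc_subset_Icc hc.1 hd.2
    have hsubo : Ioo c d ⊆ Ioo a b := Ioo_subset_Ioo hc.1 hd.2
    exact vdc_nonstationary c d hcd φ ψ χ μ hsq (hφc.mono hsub) (hψc.mono hsub)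
      (hχc.mono hsub) (fun y hy => hφ' y (hsubo hy)) (fun y hy => hψ' y (hsubo hy))
      (fun y hy => hχ0 y (hsub hy)) hsgn
  by_cases h1 : μ ≤ ψ a
  · have := key a b hmema hmemb hab (Or.inl (fun y hy => le_trans h1 (hmono a hmema y hy hy.1)))
    calc ‖∫ y in a..b, Complex.exp (Complex.I * ((φ y : ℝ) : ℂ))‖ ≤ 4 / μ := this
      _ ≤ 10 / μ := (div_le_div_iff_of_pos_right hsq).2 (by norm_num)
      _ = 10 / Real.sqrt lam := rfl
  by_cases h2 : ψ b ≤ -μ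
  · have := key a b hmema hmemb hab
      (Or.inr (fun y hy => le_trans (hmono y hy b hmemb hy.2) h2))
    calc ‖∫ y in a..b, Complex.exp (Complex.I * ((φ y : ℝ) : ℂ))‖ ≤ 4 / μ := this
      _ ≤ 10 / μ := (div_le_div_iff_of_pos_right hsq).2 (by norm_num)
      _ = 10 / Real.sqrt lam := rfl
  push_neg at h1 h2
  -- left endpoint of the stationary region
  obtain ⟨u, hu, huψ, hucase, hL⟩ :
      ∃ u, u ∈ s ∧ -μ ≤ ψ u ∧ (u = a ∨ ψ u = -μ) ∧
        ‖∫ y in a..u, Complex.exp (Complex.I * ((φ y : ℝ) : ℂ))‖ ≤ 4 / μ := by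
    by_cases hua : -μ ≤ ψ a
    · refine ⟨a, hmema, hua, Or.inl rfl, ?_⟩
      rw [intervalIntegral.integral_same, norm_zero]; positivity
    · push_neg at hua
      obtain ⟨u, hu, hψu⟩ := intermediate_value_Icc hab hψc ⟨hua.le, h2.le⟩
      refine ⟨u, hu, hψu.ge, Or.inr hψu, key a u hmema hu hu.1 (Or.inr fun y hy => ?_)⟩
      have hys : y ∈ s := ⟨hy.1, le_trans hy.2 hu.2⟩
      calc ψ y ≤ ψ u := hmono y hys u hu hy.2
        _ = -μ := hψu
  -- right endpoint of the stationary region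
  obtain ⟨v, hv, hvψ, hvcase, hR⟩ :
      ∃ v, v ∈ s ∧ ψ v ≤ μ ∧ (v = b ∨ ψ v = μ) ∧
        ‖∫ y in v..b, Complex.exp (Complex.I * ((φ y : ℝ) : ℂ))‖ ≤ 4 / μ := by
    by_cases hvb : ψ b ≤ μ
    · refine ⟨b, hmemb, hvb, Or.inl rfl, ?_⟩
      rw [intervalIntegral.integral_same, norm_zero]; positivity
    · push_neg at hvb
      obtain ⟨v, hv, hψv⟩ := intermediate_value_Icc hab hψc ⟨h1.le, hvb.le⟩
      refine ⟨v, hv, hψv.le, Or.inr hψv, key v b hv hmemb hv.2 (Or.inl fun y hy => ?_)⟩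
      have hys : y ∈ s := ⟨le_trans hv.1 hy.1, hy.2⟩
      calc μ = ψ v := hψv.symm
        _ ≤ ψ y := hmono v hv y hys hy.1
  have huv : u ≤ v := by
    rcases hucase with rfl | hψu
    · exact hv.1
    rcases hvcase with rfl | hψv
    · exact hu.2
    by_contra h
    push_neg at h
    have := hmono v hv u hu h.le
    rw [hψu, hψv] at this
    linarith
  -- middle part
  have hmid : ‖∫ y in u..v, Complex.exp (Complex.I * ((φ y : ℝ) : ℂ))‖ ≤ 2 / μ := by
    have hlen : v - u ≤ 2 / μ := by
      have h := hmvt u hu v hv huv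
      rw [le_div_iff₀ hsq]
      nlinarith [hsq, hμlam, huψ, hvψ]
    have hone : ∀ x ∈ Set.uIoc u v, ‖Complex.exp (Complex.I * ((φ x : ℝ) : ℂ))‖ ≤ 1 := by
      intro x hx
      rw [Complex.norm_exp]
      simp
    calc ‖∫ y in u..v, Complex.exp (Complex.I * ((φ y : ℝ) : ℂ))‖ ≤ 1 * |v - u| :=
          intervalIntegral.norm_integral_le_of_norm_le_const hone
      _ = v - u := by rw [one_mul, _root_.abs_of_nonneg (by linarith)]
      _ ≤ 2 / μ := hlen
  -- glue
  have hecont : ContinuousOn (fun y => Complex.exp (Complex.I * ((φ y : ℝ) : ℂ))) s :=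
    (Complex.continuous_exp.comp (continuous_const.mul Complex.continuous_ofReal)).comp_continuousOn hφc
  have hint : ∀ c d : ℝ, c ∈ s → d ∈ s →
      IntervalIntegrable (fun y => Complex.exp (Complex.I * ((φ y : ℝ) : ℂ))) volume c d := by
    intro c d hc hd
    apply ContinuousOn.intervalIntegrable
    exact hecont.mono (uIcc_subset_Icc hc hd)
  have hsplit1 := intervalIntegral.integral_add_adjacent_intervals
    (hint a u hmema hu) (hint u v hu hv)
  have hsplit2 := intervalIntegral.integral_add_adjacent_intervals
    (hint a v hmema hv) (hint v b hv hmemb)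
  calc ‖∫ y in a..b, Complex.exp (Complex.I * ((φ y : ℝ) : ℂ))‖
      = ‖((∫ y in a..u, Complex.exp (Complex.I * ((φ y : ℝ) : ℂ))) +
          (∫ y in u..v, Complex.exp (Complex.I * ((φ y : ℝ) : ℂ)))) +
          (∫ y in v..b, Complex.exp (Complex.I * ((φ y : ℝ) : ℂ)))‖ := by
        rw [hsplit1, hsplit2]
    _ ≤ ‖(∫ y in a..u, Complex.exp (Complex.I * ((φ y : ℝ) : ℂ))) +
          (∫ y in u..v, Complex.exp (Complex.I * ((φ y : ℝ) : ℂ)))‖ +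
          ‖∫ y in v..b, Complex.exp (Complex.I * ((φ y : ℝ) : ℂ))‖ := norm_add_le _ _
    _ ≤ (‖∫ y in a..u, Complex.exp (Complex.I * ((φ y : ℝ) : ℂ))‖ +
          ‖∫ y in u..v, Complex.exp (Complex.I * ((φ y : ℝ) : ℂ))‖) +
          ‖∫ y in v..b, Complex.exp (Complex.I * ((φ y : ℝ) : ℂ))‖ :=
        add_le_add (norm_add_le _ _) le_rfl
    _ ≤ (4 / μ + 2 / μ) + 4 / μ := add_le_add (add_le_add hL hmid) hR
    _ = 10 / Real.sqrt lam := by rw [hμdef]; ring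
end

section
/- Decay of inner products of wave packets: let φ be a Schwartz function and for a rectangle σ = I_σ × ω_σ of area 1 define φ_σ(x) = |I_σ|^{−1/2} e^{2πi c(ω_σ) x} φ((x − c(I_σ))/|I_σ|), where c(J) denotes the center of J. If σ, σ' are two such rectangles with ω_σ ⊆ ω_{σ'} (hence |I_{σ'}| ≤ |I_σ|), then |⟨φ_σ, φ_{σ'}⟩| ≤ C √(|I_{σ'}|/|I_σ|) · (1 + dist(c(I_{σ'}), I_σ)/|I_σ|)^{−100}, where C depends only on finitely many Schwartz seminorms of φ and we additionally assume φ̂ is supported in [−1/40, 1/40] so that φ̂_σ is supported in ω_σ-adapted intervals. -/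
open MeasureTheory Complex

set_option maxRecDepth 8000 in
set_option maxHeartbeats 1000000 in
/-- decay of inner products of wave packets.  For a Schwartz
function `φ` with `φ̂` supported in `[-1/40, 1/40]`, and two tiles
`σ = I_σ × ω_σ`, `σ' = I_{σ'} × ω_{σ'}` of area 1 (encoded by the centers
`cI, cI'` and lengths `L, L'` of the spatial intervals and the centers
`cω, cω'` of the frequency intervals of lengths `1/L, 1/L'`) with
`ω_σ ⊆ ω_{σ'}`, the wave packets
`φ_σ(x) = L^{-1/2} e^{2πi cω x} φ((x - cI)/L)` satisfy
`|⟨φ_σ, φ_{σ'}⟩| ≤ C √(L'/L) (1 + dist(cI', I_σ)/L)^{-100}`. -/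
theorem wave_packet_inner_product_decay (φ : SchwartzMap ℝ ℂ)
    (hhat : Function.support (FourierTransform.fourier (⇑φ : ℝ → ℂ)) ⊆ Set.Icc (-(1/40) : ℝ) (1/40)) :
    ∃ C : ℝ, 0 < C ∧
      ∀ cI cI' cω cω' L L' : ℝ, 0 < L → 0 < L' →
        Set.Icc (cω - 1/(2*L)) (cω + 1/(2*L)) ⊆ Set.Icc (cω' - 1/(2*L')) (cω' + 1/(2*L')) →
        ‖∫ x : ℝ,
            (((Real.sqrt L)⁻¹ : ℝ) : ℂ) *
              Complex.exp (2 * Real.pi * Complex.I * ((cω * x : ℝ) : ℂ)) * φ ((x - cI)/L) *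
            (starRingEnd ℂ)
              ((((Real.sqrt L')⁻¹ : ℝ) : ℂ) *
                Complex.exp (2 * Real.pi * Complex.I * ((cω' * x : ℝ) : ℂ)) * φ ((x - cI')/L'))‖
          ≤ C * Real.sqrt (L'/L) *
              ((1 + Metric.infDist cI' (Set.Icc (cI - L/2) (cI + L/2)) / L) ^ (100:ℕ))⁻¹ := by
  -- Schwartz decay bound
  obtain ⟨S, hS0, hS⟩ : ∃ S : ℝ, 0 ≤ S ∧ ∀ (k : ℕ), k ≤ 102 → ∀ x : ℝ,
      (1 + |x|) ^ k * ‖φ x‖ ≤ S := by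
    refine ⟨2 ^ 102 * (Finset.Iic ((102 : ℕ), (0 : ℕ))).sup
        (fun m => SchwartzMap.seminorm ℝ m.1 m.2) φ, by positivity, ?_⟩
    intro k hk x
    have h := SchwartzMap.one_add_le_sup_seminorm_apply (𝕜 := ℝ) (m := (102, 0)) hk le_rfl φ x
    simpa only [norm_iteratedFDeriv_zero, Real.norm_eq_abs] using h
  have hφ : ∀ (k : ℕ), k ≤ 102 → ∀ x : ℝ, ‖φ x‖ ≤ S * ((1 + |x|) ^ k)⁻¹ := by
    intro k hk x
    have hpos : (0:ℝ) < (1 + |x|) ^ k := by positivity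
    have h := hS k hk x
    calc ‖φ x‖ = ((1 + |x|) ^ k * ‖φ x‖) * ((1 + |x|) ^ k)⁻¹ := by
          field_simp
      _ ≤ S * ((1 + |x|) ^ k)⁻¹ := by
          apply mul_le_mul_of_nonneg_right h (by positivity)
  have hInt : Integrable (fun x : ℝ => ((1 + |x|) ^ 2)⁻¹) := by
    have h := integrable_one_add_norm (E := ℝ) (μ := volume) (r := 2) (by norm_num)
    refine h.congr ?_
    filter_upwards with x
    rw [Real.rpow_neg (by positivity)]
    norm_num [Real.norm_eq_abs, Real.rpow_natCast]
  set A := ∫ x : ℝ, ((1 + |x|) ^ 2)⁻¹ with hAdef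
  have hA0 : 0 ≤ A := integral_nonneg fun x => by positivity
  refine ⟨S * S * A + 1, by positivity, ?_⟩
  intro cI cI' cω cω' L L' hL hL' hsub
  -- from the frequency inclusion, L' ≤ L
  have hLL : L' ≤ L := by
    have hpos : (0:ℝ) < 1/(2*L) := by positivity
    have h1 := (hsub ⟨by linarith, le_refl _⟩ :
      cω + 1/(2*L) ∈ Set.Icc (cω' - 1/(2*L')) (cω' + 1/(2*L')))
    have h2 := (hsub ⟨le_refl _, by linarith⟩ :
      cω - 1/(2*L) ∈ Set.Icc (cω' - 1/(2*L')) (cω' + 1/(2*L')))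
    have h3 : 1/(2*L) ≤ 1/(2*L') := by
      have := h1.2
      have := h2.1
      linarith
    rw [div_le_div_iff₀ (by positivity) (by positivity)] at h3
    nlinarith
  set D := Metric.infDist cI' (Set.Icc (cI - L/2) (cI + L/2)) with hDdef
  have hD0 : 0 ≤ D := Metric.infDist_nonneg
  have hDle : D ≤ |cI' - cI| := by
    have hmem : cI ∈ Set.Icc (cI - L/2) (cI + L/2) := by
      constructor <;> linarith
    simpa [Real.dist_eq] using Metric.infDist_le_dist_of_mem hmem
  have hDL0 : 0 ≤ D / L := div_nonneg hD0 hL.le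
  -- the dominating function
  set c0 : ℝ := (Real.sqrt L)⁻¹ * (Real.sqrt L')⁻¹ * (S * S) * ((1 + D/L) ^ (100:ℕ))⁻¹
    with hc0
  have hc00 : 0 ≤ c0 := by positivity
  set g : ℝ → ℝ := fun x => c0 * ((1 + |(x - cI')/L'|) ^ 2)⁻¹ with hg
  -- pointwise bound
  have key : ∀ x : ℝ,
      ‖(((Real.sqrt L)⁻¹ : ℝ) : ℂ) *
          Complex.exp (2 * Real.pi * Complex.I * ((cω * x : ℝ) : ℂ)) * φ ((x - cI)/L) *
        (starRingEnd ℂ)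
          ((((Real.sqrt L')⁻¹ : ℝ) : ℂ) *
            Complex.exp (2 * Real.pi * Complex.I * ((cω' * x : ℝ) : ℂ)) * φ ((x - cI')/L'))‖
        ≤ g x := by
    intro x
    have hnorm : ‖(((Real.sqrt L)⁻¹ : ℝ) : ℂ) *
          Complex.exp (2 * Real.pi * Complex.I * ((cω * x : ℝ) : ℂ)) * φ ((x - cI)/L) *
        (starRingEnd ℂ)
          ((((Real.sqrt L')⁻¹ : ℝ) : ℂ) *
            Complex.exp (2 * Real.pi * Complex.I * ((cω' * x : ℝ) : ℂ)) * φ ((x - cI')/L'))‖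
        = (Real.sqrt L)⁻¹ * (Real.sqrt L')⁻¹ * (‖φ ((x - cI)/L)‖ * ‖φ ((x - cI')/L')‖) := by
      simp only [norm_mul, RingHomIsometric.norm_map, Real.norm_eq_abs, map_mul,
        Complex.norm_conj, Complex.norm_real, Complex.norm_exp]
      have h1 : (2 * (Real.pi : ℂ) * Complex.I * ((cω * x : ℝ) : ℂ)).re = 0 := by
        simp [Complex.mul_re, Complex.mul_im]
      have h2 : (2 * (Real.pi : ℂ) * Complex.I * ((cω' * x : ℝ) : ℂ)).re = 0 := by
        simp [Complex.mul_re, Complex.mul_im]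
      rw [h1, h2]
      rw [_root_.abs_of_nonneg (inv_nonneg.mpr (Real.sqrt_nonneg L)),
        _root_.abs_of_nonneg (inv_nonneg.mpr (Real.sqrt_nonneg L')), Real.exp_zero]
      ring
    rw [hnorm, hg]
    set a := |(x - cI)/L| with ha
    set b := |(x - cI')/L'| with hb
    have ha0 : 0 ≤ a := abs_nonneg _
    have hb0 : 0 ≤ b := abs_nonneg _
    -- key triangle-type inequality
    have hab : 1 + D/L ≤ (1 + a) * (1 + b) := by
      have haL : a = |x - cI| / L := by rw [ha, abs_div, abs_of_pos hL]
      have hbL : b = |x - cI'| / L' := by rw [hb, abs_div, abs_of_pos hL']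
      have h1 : |x - cI'| / L ≤ b := by
        rw [hbL]
        exact div_le_div_of_nonneg_left (abs_nonneg _) hL' hLL
      have h2 : D ≤ |x - cI| + |x - cI'| := by
        refine le_trans hDle ?_
        calc |cI' - cI| ≤ |cI' - x| + |x - cI| := abs_sub_le _ _ _
          _ = |x - cI| + |x - cI'| := by rw [abs_sub_comm cI' x]; ring
      have h3 : D / L ≤ |x - cI| / L + |x - cI'| / L := by
        rw [← add_div]
        exact div_le_div_of_nonneg_right h2 hL.le
      have h4 : D / L ≤ a + b := by
        rw [haL] at *
        linarith
      nlinarith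
    have hpow : ((1 + a) ^ (100:ℕ))⁻¹ * ((1 + b) ^ (100:ℕ))⁻¹ ≤ ((1 + D/L) ^ (100:ℕ))⁻¹ := by
      rw [← mul_inv, ← mul_pow]
      exact inv_anti₀ (by positivity) (pow_le_pow_left₀ (by positivity) hab 100)
    have h100 := hφ 100 (by norm_num) ((x - cI)/L)
    have h102 := hφ 102 le_rfl ((x - cI')/L')
    calc (Real.sqrt L)⁻¹ * (Real.sqrt L')⁻¹ * (‖φ ((x - cI)/L)‖ * ‖φ ((x - cI')/L')‖)
        ≤ (Real.sqrt L)⁻¹ * (Real.sqrt L')⁻¹ *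
            ((S * ((1 + a) ^ (100:ℕ))⁻¹) * (S * ((1 + b) ^ (102:ℕ))⁻¹)) := by
          gcongr
      _ = ((Real.sqrt L)⁻¹ * (Real.sqrt L')⁻¹ * (S * S)) *
            (((1 + a) ^ (100:ℕ))⁻¹ * ((1 + b) ^ (100:ℕ))⁻¹) * ((1 + b) ^ 2)⁻¹ := by
          rw [show ((1 + b) ^ (102:ℕ) : ℝ) = (1 + b) ^ (100:ℕ) * (1 + b) ^ 2 by ring,
            mul_inv]
          ring
      _ ≤ ((Real.sqrt L)⁻¹ * (Real.sqrt L')⁻¹ * (S * S)) *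
            ((1 + D/L) ^ (100:ℕ))⁻¹ * ((1 + b) ^ 2)⁻¹ := by
          apply mul_le_mul_of_nonneg_right _ (by positivity)
          exact mul_le_mul_of_nonneg_left hpow (by positivity)
      _ = c0 * ((1 + b) ^ 2)⁻¹ := by rw [hc0]
  -- integrability of the dominating function
  have hgint : Integrable g := by
    have h2 := (hInt.comp_div (show L' ≠ 0 from hL'.ne')).comp_sub_right cI'
    exact h2.const_mul c0
  -- value of the integral of g
  have hgval : ∫ x : ℝ, g x = c0 * (L' * A) := by
    rw [hg]
    rw [integral_const_mul]
    congr 1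
    have heq : (∫ x : ℝ, ((1 + |(x - cI')/L'|) ^ 2)⁻¹)
        = ∫ x : ℝ, (fun y : ℝ => ((1 + |y/L'|) ^ 2)⁻¹) (x - cI') := rfl
    rw [heq, integral_sub_right_eq_self (fun y : ℝ => ((1 + |y/L'|) ^ 2)⁻¹) cI']
    have := MeasureTheory.Measure.integral_comp_div (fun y : ℝ => ((1 + |y|) ^ 2)⁻¹) L'
    rw [this, abs_of_pos hL', smul_eq_mul]
  -- assemble
  calc ‖∫ x : ℝ,
        (((Real.sqrt L)⁻¹ : ℝ) : ℂ) *
          Complex.exp (2 * Real.pi * Complex.I * ((cω * x : ℝ) : ℂ)) * φ ((x - cI)/L) *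
        (starRingEnd ℂ)
          ((((Real.sqrt L')⁻¹ : ℝ) : ℂ) *
            Complex.exp (2 * Real.pi * Complex.I * ((cω' * x : ℝ) : ℂ)) * φ ((x - cI')/L'))‖
      ≤ ∫ x : ℝ, ‖(((Real.sqrt L)⁻¹ : ℝ) : ℂ) *
          Complex.exp (2 * Real.pi * Complex.I * ((cω * x : ℝ) : ℂ)) * φ ((x - cI)/L) *
        (starRingEnd ℂ)
          ((((Real.sqrt L')⁻¹ : ℝ) : ℂ) *
            Complex.exp (2 * Real.pi * Complex.I * ((cω' * x : ℝ) : ℂ)) * φ ((x - cI')/L'))‖ :=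
        norm_integral_le_integral_norm _
    _ ≤ ∫ x : ℝ, g x := by
        apply integral_mono_of_nonneg (ae_of_all _ fun x => norm_nonneg _) hgint
        exact ae_of_all _ key
    _ = c0 * (L' * A) := hgval
    _ ≤ (S * S * A + 1) * Real.sqrt (L'/L) * ((1 + D/L) ^ (100:ℕ))⁻¹ := by
        have hsqrt : (Real.sqrt L)⁻¹ * (Real.sqrt L')⁻¹ * L' = Real.sqrt (L'/L) := by
          rw [Real.sqrt_div hL'.le]
          have hL0 : Real.sqrt L ≠ 0 := by positivity
          have hL'0 : Real.sqrt L' ≠ 0 := by positivity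
          field_simp
          linear_combination (-1) * Real.sq_sqrt hL'.le
        have : c0 * (L' * A) = (S * S * A) * Real.sqrt (L'/L) * ((1 + D/L) ^ (100:ℕ))⁻¹ := by
          rw [hc0, ← hsqrt]; ring
        rw [this]
        have hx1 : 0 ≤ Real.sqrt (L'/L) := Real.sqrt_nonneg _
        have hx2 : (0:ℝ) ≤ ((1 + D/L) ^ (100:ℕ))⁻¹ := by positivity
        have hSSA : S * S * A ≤ S * S * A + 1 := by linarith
        apply mul_le_mul_of_nonneg_right _ hx2
        exact mul_le_mul_of_nonneg_right hSSA hx1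
end
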